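/- arXiv:0903.2782 — 2 statements merged into one kernel-verified Lean document; each statement's English description precedes it below -/
import Mathlib

section
/- Let E : ℝ → ℝ be differentiable, δ > 0, η > 0, ρ ∈ (0, 1/2], and suppose: (i) on each interval I_j = [s+jη, s+(j+1)η], j ∈ ℕ, there is a differentiable function E_j with (1−ρ)E_j(t) ≤ E(t) ≤ (1+ρ)E_j(t) and E_j(t) ≥ 0, and (ii) E_j'(t) + δE_j(t) ≤ 0 for t ∈ I_j. If moreover ((1+ρ)/(1−ρ))e^{−δη/2} ≤ 1, then E(t) ≤ ((1+ρ)/(1−ρ)) e^{−(δ/2)(t−s)} E(s) for all t ≥ s. -/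
/-- Grönwall-type decay on an interval. -/
lemma decay_lem (f : ℝ → ℝ) (hf : Differentiable ℝ f) (δ a b : ℝ)
    (h : ∀ t ∈ Set.Icc a b, deriv f t + δ * f t ≤ 0) :
    ∀ t ∈ Set.Icc a b, f t ≤ Real.exp (-δ * (t - a)) * f a := by
  intro t ht
  set g : ℝ → ℝ := fun u => Real.exp (δ * u) * f u with hg
  have hgdiff : Differentiable ℝ g := by
    exact (Real.differentiable_exp.comp (differentiable_id.const_mul δ)).mul hf
  have hderiv : ∀ u, deriv g u = Real.exp (δ * u) * (deriv f u + δ * f u) := by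
    intro u
    have : HasDerivAt g (Real.exp (δ * u) * δ * f u + Real.exp (δ * u) * deriv f u) u := by
      have h1 : HasDerivAt (fun u => Real.exp (δ * u)) (Real.exp (δ * u) * δ) u := by
        have := (Real.hasDerivAt_exp (δ * u)).comp u ((hasDerivAt_id u).const_mul δ)
        simpa [mul_comm, Function.comp_def] using this
      exact h1.mul (hf u).hasDerivAt
    rw [this.deriv]; ring
  have hmono : AntitoneOn g (Set.Icc a b) := by
    apply antitoneOn_of_deriv_nonpos (convex_Icc a b) hgdiff.continuous.continuousOn
      (fun u _ => hgdiff u |>.differentiableWithinAt)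
    intro u hu
    rw [interior_Icc] at hu
    rw [hderiv u]
    have := h u ⟨hu.1.le, hu.2.le⟩
    have he : (0:ℝ) < Real.exp (δ * u) := Real.exp_pos _
    nlinarith
  have hab : a ∈ Set.Icc a b := ⟨le_refl a, le_trans ht.1 ht.2⟩
  have := hmono hab ht ht.1
  have hEt : Real.exp (δ * t) * f t ≤ Real.exp (δ * a) * f a := this
  have hpos : (0:ℝ) < Real.exp (δ * t) := Real.exp_pos _
  rw [show -δ * (t - a) = δ * a - δ * t by ring, Real.exp_sub, div_mul_eq_mul_div,
    le_div_iff₀ hpos]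
  nlinarith

/-- Iteration of piecewise exponential decay of comparable energy functionals
yields global exponential decay with halved rate. -/
theorem stmt_7 (E : ℝ → ℝ) (hE : Differentiable ℝ E)
    (δ η : ℝ) (hδ : 0 < δ) (hη : 0 < η)
    (ρ : ℝ) (hρ0 : 0 < ρ) (hρ : ρ ≤ 1 / 2) (s : ℝ)
    (Ej : ℕ → ℝ → ℝ) (hEjdiff : ∀ j : ℕ, Differentiable ℝ (Ej j))
    (hcomp : ∀ j : ℕ, ∀ t ∈ Set.Icc (s + j * η) (s + (j + 1) * η),
      (1 - ρ) * Ej j t ≤ E t ∧ E t ≤ (1 + ρ) * Ej j t ∧ 0 ≤ Ej j t)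
    (hdecay : ∀ j : ℕ, ∀ t ∈ Set.Icc (s + j * η) (s + (j + 1) * η),
      deriv (Ej j) t + δ * Ej j t ≤ 0)
    (hfac : ((1 + ρ) / (1 - ρ)) * Real.exp (-δ * η / 2) ≤ 1) :
    ∀ t ≥ s, E t ≤ ((1 + ρ) / (1 - ρ)) * Real.exp (-(δ / 2) * (t - s)) * E s := by
  have hρ1 : (0:ℝ) < 1 - ρ := by linarith
  have hC : (0:ℝ) < (1 + ρ) / (1 - ρ) := div_pos (by linarith) hρ1
  -- Step 1: within each interval
  have step1 : ∀ j : ℕ, ∀ t ∈ Set.Icc (s + j * η) (s + (j + 1) * η),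
      E t ≤ ((1 + ρ) / (1 - ρ)) * Real.exp (-δ * (t - (s + j * η))) * E (s + j * η) := by
    intro j t ht
    obtain ⟨h1, h2, h3⟩ := hcomp j t ht
    have ha : (s + (j:ℝ) * η) ∈ Set.Icc (s + (j:ℝ) * η) (s + ((j:ℝ) + 1) * η) := by
      exact ⟨le_refl _, by nlinarith⟩
    obtain ⟨ha1, _, ha3⟩ := hcomp j _ ha
    have hdec := decay_lem (Ej j) (hEjdiff j) δ _ _ (hdecay j) t ht
    have hexp : (0:ℝ) < Real.exp (-δ * (t - (s + (j:ℝ) * η))) := Real.exp_pos _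
    have hEja : Ej j (s + (j:ℝ) * η) ≤ E (s + (j:ℝ) * η) / (1 - ρ) := by
      rw [le_div_iff₀ hρ1]; linarith
    calc E t ≤ (1 + ρ) * Ej j t := h2
      _ ≤ (1 + ρ) * (Real.exp (-δ * (t - (s + (j:ℝ) * η))) * Ej j (s + (j:ℝ) * η)) := by
          apply mul_le_mul_of_nonneg_left hdec (by linarith)
      _ ≤ (1 + ρ) * (Real.exp (-δ * (t - (s + (j:ℝ) * η))) * (E (s + (j:ℝ) * η) / (1 - ρ))) := by
          apply mul_le_mul_of_nonneg_left _ (by linarith)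
          exact mul_le_mul_of_nonneg_left hEja hexp.le
      _ = (1 + ρ) / (1 - ρ) * Real.exp (-δ * (t - (s + (j:ℝ) * η))) * E (s + (j:ℝ) * η) := by
          field_simp
  -- nonnegativity of E at nodes
  have hnodenneg : ∀ j : ℕ, 0 ≤ E (s + (j:ℝ) * η) := by
    intro j
    have ha : (s + (j:ℝ) * η) ∈ Set.Icc (s + (j:ℝ) * η) (s + ((j:ℝ) + 1) * η) :=
      ⟨le_refl _, by nlinarith⟩
    obtain ⟨ha1, _, ha3⟩ := hcomp j _ ha
    nlinarith
  -- Step 2: decay at nodes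
  have step2 : ∀ n : ℕ, E (s + (n:ℝ) * η) ≤ Real.exp (-(δ / 2) * ((n:ℝ) * η)) * E s := by
    intro n
    induction n with
    | zero => simp
    | succ n ih =>
      have hb : (s + ((n:ℝ) + 1) * η) ∈ Set.Icc (s + (n:ℝ) * η) (s + ((n:ℝ) + 1) * η) :=
        ⟨by nlinarith, le_refl _⟩
      have h1 := step1 n _ hb
      have heq : -δ * (s + ((n:ℝ) + 1) * η - (s + (n:ℝ) * η)) = -δ * η := by ring
      rw [heq] at h1
      have hsplit : Real.exp (-δ * η) = Real.exp (-δ * η / 2) * Real.exp (-δ * η / 2) := by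
        rw [← Real.exp_add]; ring_nf
      have hkey : (1 + ρ) / (1 - ρ) * Real.exp (-δ * η) ≤ Real.exp (-δ * η / 2) := by
        rw [hsplit, ← mul_assoc]
        exact mul_le_mul_of_nonneg_right hfac (Real.exp_pos _).le |>.trans (by simp)
      have h2 : E (s + ((n:ℝ) + 1) * η) ≤ Real.exp (-δ * η / 2) * E (s + (n:ℝ) * η) := by
        calc E (s + ((n:ℝ) + 1) * η) ≤ (1 + ρ) / (1 - ρ) * Real.exp (-δ * η) * E (s + (n:ℝ) * η) := h1
          _ ≤ Real.exp (-δ * η / 2) * E (s + (n:ℝ) * η) :=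
              mul_le_mul_of_nonneg_right hkey (hnodenneg n)
      have h3 : E (s + ((n:ℝ) + 1) * η) ≤ Real.exp (-δ * η / 2) * (Real.exp (-(δ / 2) * ((n:ℝ) * η)) * E s) :=
        h2.trans (mul_le_mul_of_nonneg_left ih (Real.exp_pos _).le)
      have hcast : ((n + 1 : ℕ) : ℝ) = (n:ℝ) + 1 := by push_cast; ring
      rw [hcast]
      calc E (s + ((n:ℝ) + 1) * η) ≤ Real.exp (-δ * η / 2) * (Real.exp (-(δ / 2) * ((n:ℝ) * η)) * E s) := h3
        _ = Real.exp (-(δ / 2) * (((n:ℝ) + 1) * η)) * E s := by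
            rw [← mul_assoc, ← Real.exp_add]; ring_nf
  -- Step 3: combine
  intro t ht
  set n : ℕ := ⌊(t - s) / η⌋₊ with hn
  have hts : (0:ℝ) ≤ (t - s) / η := div_nonneg (by linarith) hη.le
  have hfl : ((n:ℝ)) ≤ (t - s) / η := Nat.floor_le hts
  have hfu : (t - s) / η < (n:ℝ) + 1 := Nat.lt_floor_add_one _
  have hl : s + (n:ℝ) * η ≤ t := by
    have := mul_le_mul_of_nonneg_right hfl hη.le
    rw [div_mul_cancel₀ _ hη.ne'] at this
    linarith
  have hu : t ≤ s + ((n:ℝ) + 1) * η := by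
    have := mul_le_mul_of_nonneg_right hfu.le hη.le
    rw [div_mul_cancel₀ _ hη.ne'] at this
    linarith
  have h1 := step1 n t ⟨hl, hu⟩
  have hnn := hnodenneg n
  have hexp1 : Real.exp (-δ * (t - (s + (n:ℝ) * η))) ≤ Real.exp (-(δ / 2) * (t - (s + (n:ℝ) * η))) := by
    apply Real.exp_le_exp.mpr; nlinarith
  have h2 : E t ≤ (1 + ρ) / (1 - ρ) * Real.exp (-(δ / 2) * (t - (s + (n:ℝ) * η))) * E (s + (n:ℝ) * η) := by
    refine h1.trans ?_
    apply mul_le_mul_of_nonneg_right _ hnn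
    exact mul_le_mul_of_nonneg_left hexp1 hC.le
  have h3 := step2 n
  calc E t ≤ (1 + ρ) / (1 - ρ) * Real.exp (-(δ / 2) * (t - (s + (n:ℝ) * η))) * E (s + (n:ℝ) * η) := h2
    _ ≤ (1 + ρ) / (1 - ρ) * Real.exp (-(δ / 2) * (t - (s + (n:ℝ) * η))) * (Real.exp (-(δ / 2) * ((n:ℝ) * η)) * E s) := by
        apply mul_le_mul_of_nonneg_left h3
        positivity
    _ = (1 + ρ) / (1 - ρ) * Real.exp (-(δ / 2) * (t - s)) * E s := by
        rw [mul_assoc, ← mul_assoc (Real.exp _), ← Real.exp_add, ← mul_assoc]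
        ring_nf
end

section
/- Let δ, λ₁ > 0 with δ ≤ min{1/2, λ₁/2}, let ε ∈ (0,1], and let H, V be Hilbert spaces with V ⊆ H and ‖v‖²_V ≥ (λ₁+θ)‖v‖²_H for θ ≥ 0. For (v,w) ∈ V × H define E(v,w) := (ε/2)‖δv+w‖²_H + (1/2)‖v‖²_V + (1/2)(εδ²−δ)‖v‖²_H, and let ‖(v,w)‖² := ‖v‖²_V + ε‖w‖²_H. Then (1/4)‖(v,w)‖² ≤ E(v,w) ≤ (3/4)‖(v,w)‖² for all (v,w) ∈ V × H. -/
/-- Equivalence of the shifted energy functional with the natural ε-weighted norm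
on `Z₀ = V × H`. -/
theorem stmt_8 {V H : Type*} [NormedAddCommGroup V] [InnerProductSpace ℝ V] [CompleteSpace V]
    [NormedAddCommGroup H] [InnerProductSpace ℝ H] [CompleteSpace H]
    (ι : V →ₗ[ℝ] H)  -- the inclusion V ⊆ H
    (δ lam1 θ ε : ℝ) (hlam : 0 < lam1) (hδ0 : 0 < δ)
    (hδ : δ ≤ min (1 / 2) (lam1 / 2)) (hε0 : 0 < ε) (hε1 : ε ≤ 1) (hθ : 0 ≤ θ)
    (hVH : ∀ v : V, (lam1 + θ) * ‖ι v‖ ^ 2 ≤ ‖v‖ ^ 2) :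
    ∀ (v : V) (w : H),
      (1 / 4) * (‖v‖ ^ 2 + ε * ‖w‖ ^ 2) ≤
        (ε / 2) * ‖δ • ι v + w‖ ^ 2 + (1 / 2) * ‖v‖ ^ 2 +
          (1 / 2) * (ε * δ ^ 2 - δ) * ‖ι v‖ ^ 2 ∧
      (ε / 2) * ‖δ • ι v + w‖ ^ 2 + (1 / 2) * ‖v‖ ^ 2 +
          (1 / 2) * (ε * δ ^ 2 - δ) * ‖ι v‖ ^ 2 ≤
        (3 / 4) * (‖v‖ ^ 2 + ε * ‖w‖ ^ 2) := by
  intro v w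
  have hδ1 : δ ≤ 1 / 2 := le_trans hδ (min_le_left _ _)
  have hδ2 : δ ≤ lam1 / 2 := le_trans hδ (min_le_right _ _)
  set a := ‖ι v‖ with ha
  set b := ‖w‖ with hb
  set n := ‖v‖ with hn
  set p := (inner ℝ (ι v) w : ℝ) with hp
  have hexp : ‖δ • ι v + w‖ ^ 2 = δ ^ 2 * a ^ 2 + 2 * δ * p + b ^ 2 := by
    rw [@norm_add_sq_real]
    rw [norm_smul, real_inner_smul_left]
    simp [abs_of_pos hδ0]
    ring
  have hpab : |p| ≤ a * b := abs_real_inner_le_norm _ _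
  have hp1 : -(a * b) ≤ p := (abs_le.mp hpab).1
  have hp2 : p ≤ a * b := (abs_le.mp hpab).2
  have hna : 2 * δ * a ^ 2 ≤ n ^ 2 := by
    have h1 := hVH v
    nlinarith [sq_nonneg a]
  rw [hexp]
  constructor
  · nlinarith [sq_nonneg (δ * a - b / 2), mul_pos hε0 hδ0, sq_nonneg a, sq_nonneg b,
      mul_nonneg hε0.le (sq_nonneg (δ * a - b / 2)),
      mul_nonneg (mul_nonneg hε0.le hδ0.le) (by linarith : (0:ℝ) ≤ p + a * b)]
  · nlinarith [mul_nonneg hε0.le (sq_nonneg (δ * a - b / 2)),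
      mul_nonneg (mul_nonneg (sub_nonneg.mpr hε1) (sq_nonneg δ)) (sq_nonneg a),
      mul_nonneg (mul_nonneg hδ0.le (by linarith : (0:ℝ) ≤ 1 / 2 - δ)) (sq_nonneg a),
      mul_nonneg hε0.le (sq_nonneg b), sq_nonneg a,
      mul_nonneg (mul_nonneg hε0.le hδ0.le) (sub_nonneg.mpr hp2)]
end
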